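/- Let L_k ∈ ℂ^{(r+1)×(r+1)} (k = 1,…,N−r) and L_{N−r+1} ∈ ℂ^{r×r} all be lower triangular matrices, and set G = L̃_{N−r+1}·L̃_{N−r}·L̃_{N−r−1}⋯L̃_1 (product in decreasing order of indices of the embedded factors). Partition each L_k = [[p_L(k), d_L(k)],[a_L(k), q_L(k)]] with blocks of sizes 1×r, 1×1, r×r, r×1, and set p_L(N−r+1) = L_{N−r+1}. Then G is a lower triangular matrix, G is simultaneously a lower Green matrix of order r and an upper band matrix of order r, and p_L(i), q_L(i), a_L(i) (i = 1,…,N−r), p_L(N−r+1) are lower Green generators of G. -/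

import Mathlib

open Matrix

noncomputable section

/-- `A(i,j) = 0` whenever `i - j > r` (1-based; identical in 0-based `Fin` indexing). -/
def IsLowerBand (N r : ℕ) (A : Matrix (Fin N) (Fin N) ℂ) : Prop :=
  ∀ i j : Fin N, (j : ℕ) + r < (i : ℕ) → A i j = 0

/-- `A(i,j) = 0` whenever `j - i > r`. -/
def IsUpperBand (N r : ℕ) (A : Matrix (Fin N) (Fin N) ℂ) : Prop :=
  ∀ i j : Fin N, (i : ℕ) + r < (j : ℕ) → A i j = 0

/-- `rank B(k:N, 1:k+r-1) ≤ r` for every `k = 1, …, N-r` (1-based). -/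
def IsLowerGreen (N r : ℕ) (B : Matrix (Fin N) (Fin N) ℂ) : Prop :=
  ∀ (k : ℕ) (hk1 : 1 ≤ k) (hk2 : k ≤ N - r),
    (B.submatrix
      (fun i : Fin (N - k + 1) => (⟨k - 1 + (i : ℕ), by have := i.isLt; omega⟩ : Fin N))
      (fun j : Fin (k + r - 1) => (⟨(j : ℕ), by have := j.isLt; omega⟩ : Fin N))).rank ≤ r

/-- `rank B(1:k+r-1, k:N) ≤ r` for every `k = 1, …, N-r` (1-based). -/
def IsUpperGreen (N r : ℕ) (B : Matrix (Fin N) (Fin N) ℂ) : Prop :=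
  ∀ (k : ℕ) (hk1 : 1 ≤ k) (hk2 : k ≤ N - r),
    (B.submatrix
      (fun i : Fin (k + r - 1) => (⟨(i : ℕ), by have := i.isLt; omega⟩ : Fin N))
      (fun j : Fin (N - k + 1) => (⟨k - 1 + (j : ℕ), by have := j.isLt; omega⟩ : Fin N))).rank ≤ r

/-- `a^>_{i,s} = a(i-1) a(i-2) ⋯ a(s+1)`, equal to `I_r` when `s ≥ i - 1`. -/
def aGT (r : ℕ) (a : ℕ → Matrix (Fin r) (Fin r) ℂ) (i s : ℕ) :
    Matrix (Fin r) (Fin r) ℂ :=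
  (((List.range' (s + 1) (i - 1 - s)).reverse).map a).prod

/-- `p(i) ∈ ℂ^{1×r}` (i = 1,…,N−r), `pLast = p(N−r+1) ∈ ℂ^{r×r}`, `q(j) ∈ ℂ^{r×1}`,
`a(k) ∈ ℂ^{r×r}` are lower Green generators of the `N×N` matrix `B`:
`B(i,1:r) = p(i)·a^>_{i,0}`, `B(i,r+s-1) = p(i)·a^>_{i,s-1}·q(s-1)` for `2 ≤ s ≤ i ≤ N-r`,
and the analogous identities for the last `r` rows `B(N-r+1:N, ·)` with `pLast`. -/
def IsLowerGreenGenerators (N r : ℕ) (hNr : r < N)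
    (p : ℕ → Matrix (Fin 1) (Fin r) ℂ) (q : ℕ → Matrix (Fin r) (Fin 1) ℂ)
    (a : ℕ → Matrix (Fin r) (Fin r) ℂ) (pLast : Matrix (Fin r) (Fin r) ℂ)
    (B : Matrix (Fin N) (Fin N) ℂ) : Prop :=
  (∀ (i : ℕ) (hi1 : 1 ≤ i) (hi2 : i ≤ N - r) (j : Fin r),
      B ⟨i - 1, by omega⟩ ⟨(j : ℕ), by have := j.isLt; omega⟩ = (p i * aGT r a i 0) 0 j)
  ∧ (∀ (i : ℕ) (hi1 : 1 ≤ i) (hi2 : i ≤ N - r) (s : ℕ) (hs1 : 2 ≤ s) (hs2 : s ≤ i),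
      B ⟨i - 1, by omega⟩ ⟨r + s - 2, by omega⟩
        = (p i * aGT r a i (s - 1) * q (s - 1)) 0 0)
  ∧ (∀ (t : Fin r) (j : Fin r),
      B ⟨N - r + (t : ℕ), by have := t.isLt; omega⟩ ⟨(j : ℕ), by have := j.isLt; omega⟩
        = (pLast * aGT r a (N - r + 1) 0) t j)
  ∧ (∀ (t : Fin r) (s : ℕ) (hs1 : 2 ≤ s) (hs2 : s ≤ N - r + 1),
      B ⟨N - r + (t : ℕ), by have := t.isLt; omega⟩ ⟨r + s - 2, by omega⟩
        = (pLast * aGT r a (N - r + 1) (s - 1) * q (s - 1)) t 0)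

/-- The embedded factor `I_{k-1} ⊕ M ⊕ I_{N-k-r}` (1-based block position `k`),
i.e. `M` occupies (1-based) rows and columns `k, …, k+r` of an `N×N` identity. -/
def embed (N r k : ℕ) (M : Matrix (Fin (r + 1)) (Fin (r + 1)) ℂ) :
    Matrix (Fin N) (Fin N) ℂ :=
  Matrix.of fun i j =>
    if h : k - 1 ≤ (i : ℕ) ∧ (i : ℕ) < k + r ∧ k - 1 ≤ (j : ℕ) ∧ (j : ℕ) < k + r then
      M ⟨(i : ℕ) - (k - 1), by omega⟩ ⟨(j : ℕ) - (k - 1), by omega⟩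
    else if (i : ℕ) = (j : ℕ) then 1 else 0

/-- The embedded last factor `I_{N-r} ⊕ M`. -/
def embedLast (N r : ℕ) (M : Matrix (Fin r) (Fin r) ℂ) : Matrix (Fin N) (Fin N) ℂ :=
  Matrix.of fun i j =>
    if h : N - r ≤ (i : ℕ) ∧ N - r ≤ (j : ℕ) then
      M ⟨(i : ℕ) - (N - r), by have := i.isLt; omega⟩
        ⟨(j : ℕ) - (N - r), by have := j.isLt; omega⟩
    else if (i : ℕ) = (j : ℕ) then 1 else 0

/-- `G̃_1 · G̃_2 ⋯ G̃_{N-r}` (increasing order of indices). -/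
def prodAsc (N r : ℕ) (G : ℕ → Matrix (Fin (r + 1)) (Fin (r + 1)) ℂ) :
    Matrix (Fin N) (Fin N) ℂ :=
  ((List.range' 1 (N - r)).map (fun k => embed N r k (G k))).prod

/-- `G̃_{N-r} · G̃_{N-r-1} ⋯ G̃_1` (decreasing order of indices). -/
def prodDesc (N r : ℕ) (G : ℕ → Matrix (Fin (r + 1)) (Fin (r + 1)) ℂ) :
    Matrix (Fin N) (Fin N) ℂ :=
  (((List.range' 1 (N - r)).reverse).map (fun k => embed N r k (G k))).prod

/-- The `1×r` block `p` of the partition `M = [[p, d], [a, q]]`. -/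
def blkP (r : ℕ) (M : Matrix (Fin (r + 1)) (Fin (r + 1)) ℂ) : Matrix (Fin 1) (Fin r) ℂ :=
  Matrix.of fun _ j => M 0 j.castSucc

/-- The `1×1` block `d` of the partition `M = [[p, d], [a, q]]`. -/
def blkD (r : ℕ) (M : Matrix (Fin (r + 1)) (Fin (r + 1)) ℂ) : ℂ := M 0 (Fin.last r)

/-- The `r×r` block `a` of the partition `M = [[p, d], [a, q]]`. -/
def blkA (r : ℕ) (M : Matrix (Fin (r + 1)) (Fin (r + 1)) ℂ) : Matrix (Fin r) (Fin r) ℂ :=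
  Matrix.of fun i j => M i.succ j.castSucc

/-- The `r×1` block `q` of the partition `M = [[p, d], [a, q]]`. -/
def blkQ (r : ℕ) (M : Matrix (Fin (r + 1)) (Fin (r + 1)) ℂ) : Matrix (Fin r) (Fin 1) ℂ :=
  Matrix.of fun i _ => M i.succ (Fin.last r)

/-- Assemble the `(r+1)×(r+1)` matrix `[[p, d], [a, q]]` from its blocks. -/
def mkBlk (r : ℕ) (p : Matrix (Fin 1) (Fin r) ℂ) (d : ℂ)
    (a : Matrix (Fin r) (Fin r) ℂ) (q : Matrix (Fin r) (Fin 1) ℂ) :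
    Matrix (Fin (r + 1)) (Fin (r + 1)) ℂ :=
  Matrix.of fun i j =>
    if hi : (i : ℕ) = 0 then
      if hj : (j : ℕ) < r then p 0 ⟨(j : ℕ), hj⟩ else d
    else
      if hj : (j : ℕ) < r then a ⟨(i : ℕ) - 1, by have := i.isLt; omega⟩ ⟨(j : ℕ), hj⟩
      else q ⟨(i : ℕ) - 1, by have := i.isLt; omega⟩ 0

/-- The elementary Gauss factor `[[1, 0_{1×r}], [-f, I_r]]`. -/
def elemL (r : ℕ) (f : Matrix (Fin r) (Fin 1) ℂ) :
    Matrix (Fin (r + 1)) (Fin (r + 1)) ℂ :=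
  Matrix.of fun i j =>
    if hi : (i : ℕ) = 0 then (if (j : ℕ) = 0 then 1 else 0)
    else if hj : (j : ℕ) = 0 then -f ⟨(i : ℕ) - 1, by have := i.isLt; omega⟩ 0
    else if (i : ℕ) = (j : ℕ) then 1 else 0

/-- The elementary factor `[[I_r, 0_{r×1}], [-g, 1]]`. -/
def elemLrow (r : ℕ) (g : Matrix (Fin 1) (Fin r) ℂ) :
    Matrix (Fin (r + 1)) (Fin (r + 1)) ℂ :=
  Matrix.of fun i j =>
    if hi : (i : ℕ) < r then
      (if hj : (j : ℕ) < r then (if (i : ℕ) = (j : ℕ) then 1 else 0) else 0)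
    else if hj : (j : ℕ) < r then -g 0 ⟨(j : ℕ), hj⟩ else 1

/-- All leading principal minors are nonzero. -/
def StronglyRegular (N : ℕ) (A : Matrix (Fin N) (Fin N) ℂ) : Prop :=
  ∀ (k : ℕ) (hk : k ≤ N), 1 ≤ k →
    (A.submatrix (Fin.castLE hk) (Fin.castLE hk)).det ≠ 0

section Aux

variable {N r : ℕ}

lemma sum_window {w : ℕ} (m : ℕ) (hmw : m + w ≤ N) (f : Fin N → ℂ)
    (hf : ∀ l : Fin N, (l : ℕ) < m ∨ m + w ≤ (l : ℕ) → f l = 0) :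
    ∑ l : Fin N, f l
      = ∑ u : Fin w, f ⟨m + (u : ℕ), Nat.lt_of_lt_of_le (Nat.add_lt_add_left u.isLt m) hmw⟩ := by
  set f' : ℕ → ℂ := fun n => if h : n < N then f ⟨n, h⟩ else 0 with hf'
  have h1 : ∑ l : Fin N, f l = ∑ n ∈ Finset.range N, f' n := by
    rw [← Fin.sum_univ_eq_sum_range]
    exact Finset.sum_congr rfl fun l _ => by simp [hf', l.isLt]
  have h2 : ∑ n ∈ Finset.range N, f' n = ∑ n ∈ Finset.Ico m (m + w), f' n := by
    refine (Finset.sum_subset ?_ ?_).symm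
    · intro n hn
      rw [Finset.mem_Ico] at hn
      rw [Finset.mem_range]
      omega
    · intro n hn hn'
      rw [Finset.mem_range] at hn
      rw [Finset.mem_Ico, not_and_or, not_le, not_lt] at hn'
      simp only [hf', dif_pos hn]
      exact hf ⟨n, hn⟩ hn'
  have h3 : ∑ n ∈ Finset.Ico m (m + w), f' n = ∑ u ∈ Finset.range w, f' (m + u) := by
    have hw : m + w - m = w := by omega
    rw [Finset.sum_Ico_eq_sum_range, hw]
  rw [h1, h2, h3, ← Fin.sum_univ_eq_sum_range (fun u => f' (m + u)) w]
  exact Finset.sum_congr rfl fun u _ => by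
    have : m + (u : ℕ) < N := by have := u.isLt; omega
    simp [hf', this]

/-- `Rm n` is the `r × N` matrix consisting of rows `n+1, …, n+r` (1-based) of the partial
product `L̃_n ⋯ L̃_1`. -/
def Rm (N r : ℕ) (Lk : ℕ → Matrix (Fin (r + 1)) (Fin (r + 1)) ℂ) :
    ℕ → Matrix (Fin r) (Fin N) ℂ
  | 0 => Matrix.of fun t j => if (j : ℕ) = (t : ℕ) then 1 else 0
  | n + 1 => blkA r (Lk (n + 1)) * Rm N r Lk n +
      Matrix.of fun (t : Fin r) (j : Fin N) =>
        blkQ r (Lk (n + 1)) t 0 * (if (j : ℕ) = n + r then 1 else 0)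

variable (Lk : ℕ → Matrix (Fin (r + 1)) (Fin (r + 1)) ℂ)

lemma Rm_support (hL : ∀ (k : ℕ), 1 ≤ k → k ≤ N - r →
      ∀ i j : Fin (r + 1), (i : ℕ) < (j : ℕ) → Lk k i j = 0) :
    ∀ (n : ℕ), n ≤ N - r → ∀ (t : Fin r) (j : Fin N),
      n + (t : ℕ) < (j : ℕ) → Rm N r Lk n t j = 0 := by
  intro n
  induction n with
  | zero =>
    intro _ t j hj
    simp only [Rm, Matrix.of_apply]
    rw [if_neg (by omega)]
  | succ n ih =>
    intro hn t j hj
    simp only [Rm, Matrix.add_apply, Matrix.of_apply, Matrix.mul_apply]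
    have hq : blkQ r (Lk (n + 1)) t 0 * (if (j : ℕ) = n + r then 1 else 0) = 0 := by
      by_cases hc : (j : ℕ) = n + r
      · have ht : (t : ℕ) + 1 < r := by omega
        have : blkQ r (Lk (n + 1)) t 0 = 0 := by
          simp only [blkQ, Matrix.of_apply]
          exact hL (n + 1) (by omega) (by omega) _ _ (by simp [Fin.last]; omega)
        simp [this]
      · simp [hc]
    rw [hq, add_zero]
    refine Finset.sum_eq_zero fun s _ => ?_
    by_cases hs : (s : ℕ) ≤ (t : ℕ) + 1
    · have : Rm N r Lk n s j = 0 := ih (by omega) s j (by omega)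
      simp [this]
    · have : blkA r (Lk (n + 1)) t s = 0 := by
        simp only [blkA, Matrix.of_apply]
        exact hL (n + 1) (by omega) (by omega) _ _ (by simp; omega)
      simp [this]

lemma aGT_succ (a : ℕ → Matrix (Fin r) (Fin r) ℂ) {k m : ℕ} (hk : k ≤ m) :
    aGT r a (m + 2) k = a (m + 1) * aGT r a (m + 1) k := by
  have h1 : m + 2 - 1 - k = (m - k) + 1 := by omega
  have h2 : m + 1 - 1 - k = m - k := by omega
  rw [aGT, aGT, h1, h2, List.range'_concat]
  have h3 : k + 1 + 1 * (m - k) = m + 1 := by omega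
  rw [h3, List.reverse_append, List.reverse_singleton, List.singleton_append,
    List.map_cons, List.prod_cons]

lemma aGT_self (a : ℕ → Matrix (Fin r) (Fin r) ℂ) {k m : ℕ} (hk : m ≤ k) :
    aGT r a (m + 1) k = 1 := by
  have h1 : m + 1 - 1 - k = 0 := by omega
  rw [aGT, h1]
  simp

lemma Rm_factor (hL : ∀ (k : ℕ), 1 ≤ k → k ≤ N - r →
      ∀ i j : Fin (r + 1), (i : ℕ) < (j : ℕ) → Lk k i j = 0)
    (k : ℕ) : ∀ (m : ℕ), k ≤ m → m ≤ N - r → ∀ (t : Fin r) (j : Fin N), (j : ℕ) < k + r →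
      Rm N r Lk m t j = (aGT r (fun i => blkA r (Lk i)) (m + 1) k * Rm N r Lk k) t j := by
  intro m hkm
  induction m, hkm using Nat.le_induction with
  | base =>
    intro _ t j _
    rw [aGT_self _ le_rfl, Matrix.one_mul]
  | succ m hkm ih =>
    intro hm t j hj
    have hstep : Rm N r Lk (m + 1) t j = (blkA r (Lk (m + 1)) * Rm N r Lk m) t j := by
      simp only [Rm, Matrix.add_apply, Matrix.of_apply]
      rw [if_neg (by omega), mul_zero, add_zero]
    rw [hstep, show m + 1 + 1 = m + 2 from rfl, aGT_succ _ hkm, Matrix.mul_assoc]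
    rw [Matrix.mul_apply, Matrix.mul_apply]
    refine Finset.sum_congr rfl fun s _ => ?_
    rw [ih (by omega) s j hj]

lemma Rm_lastcol (hL : ∀ (k : ℕ), 1 ≤ k → k ≤ N - r →
      ∀ i j : Fin (r + 1), (i : ℕ) < (j : ℕ) → Lk k i j = 0)
    (n : ℕ) (hn1 : 1 ≤ n) (hn : n ≤ N - r) (t : Fin r) (j : Fin N)
    (hj : (j : ℕ) = n + r - 1) :
    Rm N r Lk n t j = blkQ r (Lk n) t 0 := by
  obtain ⟨n', rfl⟩ : ∃ n', n = n' + 1 := ⟨n - 1, by omega⟩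
  have hr0 : 0 < r := t.pos
  simp only [Rm, Matrix.add_apply, Matrix.of_apply, Matrix.mul_apply]
  have hjv : (j : ℕ) = n' + r := by omega
  rw [if_pos hjv, mul_one]
  have hz : ∀ s : Fin r, blkA r (Lk (n' + 1)) t s * Rm N r Lk n' s j = 0 := fun s => by
    have : Rm N r Lk n' s j = 0 :=
      Rm_support Lk hL n' (by omega) s j (by have := s.isLt; omega)
    rw [this, mul_zero]
  rw [Finset.sum_eq_zero fun s _ => hz s, zero_add]

/-- The partial product `L̃_m ⋯ L̃_1`. -/
def Bm (N r : ℕ) (Lk : ℕ → Matrix (Fin (r + 1)) (Fin (r + 1)) ℂ) (m : ℕ) :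
    Matrix (Fin N) (Fin N) ℂ :=
  (((List.range' 1 m).reverse).map (fun k => embed N r k (Lk k))).prod

lemma Bm_succ (m : ℕ) :
    Bm N r Lk (m + 1) = embed N r (m + 1) (Lk (m + 1)) * Bm N r Lk m := by
  rw [Bm, Bm, List.range'_concat]
  have h3 : 1 + 1 * m = m + 1 := by omega
  rw [h3, List.reverse_append, List.reverse_singleton, List.singleton_append,
    List.map_cons, List.prod_cons]

lemma Bm_inv (hr : 0 < r)
    (hL : ∀ (k : ℕ), 1 ≤ k → k ≤ N - r →
      ∀ i j : Fin (r + 1), (i : ℕ) < (j : ℕ) → Lk k i j = 0) :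
    ∀ (m : ℕ), m ≤ N - r →
      (∀ (i : ℕ), 1 ≤ i → i ≤ m → ∀ (j : Fin N) (hi : i - 1 < N),
        Bm N r Lk m ⟨i - 1, hi⟩ j = (blkP r (Lk i) * Rm N r Lk (i - 1)) 0 j) ∧
      (∀ (t : Fin r) (j : Fin N) (h : m + (t : ℕ) < N),
        Bm N r Lk m ⟨m + (t : ℕ), h⟩ j = Rm N r Lk m t j) ∧
      (∀ (i j : Fin N), m + r ≤ (i : ℕ) →
        Bm N r Lk m i j = if (i : ℕ) = (j : ℕ) then 1 else 0) := by
  intro m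
  induction m with
  | zero =>
    intro _
    have hB : Bm N r Lk 0 = 1 := by simp [Bm]
    refine ⟨?_, ?_, ?_⟩
    · intro i hi1 hi2 j hi
      exact absurd (hi1.trans hi2) (by omega)
    · intro t j h
      rw [hB, Matrix.one_apply]
      simp only [Rm, Matrix.of_apply]
      by_cases hc : (j : ℕ) = (t : ℕ)
      · rw [if_pos hc, if_pos (Fin.ext (by simp [hc]))]
      · rw [if_neg hc, if_neg (fun he => hc (by rw [← he]; simp))]
    · intro i j hij
      rw [hB, Matrix.one_apply]
      simp [Fin.ext_iff]
  | succ m ih =>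
    intro hm1
    have hm : m ≤ N - r := by omega
    obtain ⟨ih1, ih2, ih3⟩ := ih hm
    have hEfar : ∀ (i l : Fin N), (i : ℕ) < m ∨ m + r + 1 ≤ (i : ℕ) →
        embed N r (m + 1) (Lk (m + 1)) i l = if (i : ℕ) = (l : ℕ) then 1 else 0 := by
      intro i l hi
      simp only [embed, Matrix.of_apply]
      rw [dif_neg (by omega)]
    have hrowfar : ∀ (i j : Fin N), (i : ℕ) < m ∨ m + r + 1 ≤ (i : ℕ) →
        (embed N r (m + 1) (Lk (m + 1)) * Bm N r Lk m) i j = Bm N r Lk m i j := by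
      intro i j hi
      rw [Matrix.mul_apply]
      rw [Finset.sum_eq_single i
        (fun l _ hl => by rw [hEfar i l hi, if_neg (fun h => hl (Fin.ext h.symm)), zero_mul])
        (fun h => absurd (Finset.mem_univ i) h)]
      rw [hEfar i i hi, if_pos rfl, one_mul]
    have hrowwin : ∀ (v : Fin (r + 1)) (i : Fin N), (i : ℕ) = m + (v : ℕ) → ∀ j : Fin N,
        (embed N r (m + 1) (Lk (m + 1)) * Bm N r Lk m) i j
          = ∑ u : Fin (r + 1), Lk (m + 1) v u *
              Bm N r Lk m ⟨m + (u : ℕ), by have := u.isLt; omega⟩ j := by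
      intro v i hi j
      rw [Matrix.mul_apply]
      rw [sum_window m (by omega : m + (r + 1) ≤ N)
        (fun l => embed N r (m + 1) (Lk (m + 1)) i l * Bm N r Lk m l j)
        (by
          intro l hl
          simp only [embed, Matrix.of_apply]
          rw [dif_neg (by omega), if_neg (by have := v.isLt; omega), zero_mul])]
      refine Finset.sum_congr rfl fun u _ => ?_
      congr 1
      simp only [embed, Matrix.of_apply]
      rw [dif_pos ⟨by omega, by omega, by omega, by omega⟩]
      congr 1
      · exact Fin.ext (show (i : ℕ) - (m + 1 - 1) = (v : ℕ) by omega)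
      · exact Fin.ext (show m + (u : ℕ) - (m + 1 - 1) = (u : ℕ) by omega)
    refine ⟨?_, ?_, ?_⟩
    · intro i hi1 hi2 j hi
      rw [Bm_succ]
      rcases Nat.lt_or_ge (i - 1) m with hcase | hcase
      · rw [hrowfar _ j (Or.inl hcase)]
        exact ih1 i hi1 (by omega) j hi
      · have hieq : i = m + 1 := by omega
        subst hieq
        rw [hrowwin 0 ⟨m + 1 - 1, hi⟩ (show (m + 1 - 1 : ℕ) = m + ((0 : Fin (r + 1)) : ℕ) by simp) j]
        rw [Fin.sum_univ_castSucc]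
        have hlast : Lk (m + 1) 0 (Fin.last r) = 0 :=
          hL (m + 1) (by omega) (by omega) _ _ (by simp [hr])
        rw [hlast, zero_mul, add_zero, Matrix.mul_apply]
        simp only [Nat.add_sub_cancel]
        refine Finset.sum_congr rfl fun u _ => ?_
        have hb : Bm N r Lk m ⟨m + ((u.castSucc : Fin (r + 1)) : ℕ), by
              have := u.isLt; omega⟩ j = Rm N r Lk m u j := by
          have h2 : m + ((u.castSucc : Fin (r + 1)) : ℕ) = m + (u : ℕ) := by simp
          rw [show (⟨m + ((u.castSucc : Fin (r + 1)) : ℕ), by have := u.isLt; omega⟩ : Fin N)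
            = ⟨m + (u : ℕ), by have := u.isLt; omega⟩ from Fin.ext h2]
          exact ih2 u j _
        rw [hb]
        congr 1
    · intro t j h
      rw [Bm_succ]
      rw [hrowwin t.succ ⟨m + 1 + (t : ℕ), h⟩ (by simp [Fin.val_succ]; omega) j]
      rw [Fin.sum_univ_castSucc]
      simp only [Rm, Matrix.add_apply, Matrix.mul_apply, Matrix.of_apply]
      congr 1
      · refine Finset.sum_congr rfl fun u _ => ?_
        have hb : Bm N r Lk m ⟨m + ((u.castSucc : Fin (r + 1)) : ℕ), by
              have := u.isLt; omega⟩ j = Rm N r Lk m u j := by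
          have h2 : m + ((u.castSucc : Fin (r + 1)) : ℕ) = m + (u : ℕ) := by simp
          rw [show (⟨m + ((u.castSucc : Fin (r + 1)) : ℕ), by have := u.isLt; omega⟩ : Fin N)
            = ⟨m + (u : ℕ), by have := u.isLt; omega⟩ from Fin.ext h2]
          exact ih2 u j _
        rw [hb]
        congr 1
      · have hb : Bm N r Lk m ⟨m + ((Fin.last r : Fin (r + 1)) : ℕ), by
              have := (Fin.last r).isLt; omega⟩ j
            = if m + r = (j : ℕ) then 1 else 0 := by
          rw [ih3 _ j (by simp [Fin.val_last])]
          simp [Fin.val_last]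
        rw [hb]
        simp only [blkQ, Matrix.of_apply]
        rw [show ((if (j : ℕ) = m + r then (1:ℂ) else 0)) = (if m + r = (j : ℕ) then 1 else 0)
          from by
            by_cases hc : m + r = (j : ℕ)
            · rw [if_pos hc, if_pos hc.symm]
            · rw [if_neg hc, if_neg fun hx => hc hx.symm]]
    · intro i j hij
      rw [Bm_succ, hrowfar i j (Or.inr (by omega)), ih3 i j (by omega)]

lemma mul_Rm_factor {ι : Type} [Fintype ι]
    (hL : ∀ (k : ℕ), 1 ≤ k → k ≤ N - r →
      ∀ i j : Fin (r + 1), (i : ℕ) < (j : ℕ) → Lk k i j = 0)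
    (M : Matrix ι (Fin r) ℂ) (k m : ℕ) (hkm : k ≤ m) (hm : m ≤ N - r)
    (x : ι) (j : Fin N) (hj : (j : ℕ) < k + r) :
    (M * Rm N r Lk m) x j
      = ((M * aGT r (fun i => blkA r (Lk i)) (m + 1) k) * Rm N r Lk k) x j := by
  rw [Matrix.mul_assoc, Matrix.mul_apply, Matrix.mul_apply]
  exact Finset.sum_congr rfl fun t _ => by
    rw [Rm_factor Lk hL k m hkm hm t j hj]

lemma mul_Rm0 {ι : Type} [Fintype ι] (M : Matrix ι (Fin r) ℂ) (x : ι)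
    (j : Fin N) (o : Fin r) (ho : (j : ℕ) = (o : ℕ)) :
    (M * Rm N r Lk 0) x j = M x o := by
  rw [Matrix.mul_apply]
  rw [Finset.sum_eq_single o
    (fun u _ hu => by
      have : Rm N r Lk 0 u j = 0 := by
        simp only [Rm, Matrix.of_apply]
        rw [if_neg (fun hx => hu (Fin.ext (by omega)))]
      rw [this, mul_zero])
    (fun hmem => absurd (Finset.mem_univ _) hmem)]
  have : Rm N r Lk 0 o j = 1 := by
    simp only [Rm, Matrix.of_apply]
    rw [if_pos ho]
  rw [this, mul_one]

lemma G_rows (hr : 0 < r) (hrN : r < N)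
    (hL : ∀ (k : ℕ), 1 ≤ k → k ≤ N - r →
      ∀ i j : Fin (r + 1), (i : ℕ) < (j : ℕ) → Lk k i j = 0)
    (Llast : Matrix (Fin r) (Fin r) ℂ) :
    (∀ (i : ℕ), 1 ≤ i → i ≤ N - r → ∀ (x : Fin N), (x : ℕ) = i - 1 → ∀ (j : Fin N),
      (embedLast N r Llast * prodDesc N r Lk) x j
        = (blkP r (Lk i) * Rm N r Lk (i - 1)) 0 j) ∧
    (∀ (t : Fin r) (x : Fin N), (x : ℕ) = N - r + (t : ℕ) → ∀ (j : Fin N),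
      (embedLast N r Llast * prodDesc N r Lk) x j
        = (Llast * Rm N r Lk (N - r)) t j) := by
  have hBP : prodDesc N r Lk = Bm N r Lk (N - r) := rfl
  obtain ⟨ih1, ih2, _⟩ := Bm_inv Lk hr hL (N - r) le_rfl
  constructor
  · intro i hi1 hi2 x hx j
    have hfar : ∀ l : Fin N, embedLast N r Llast x l
        = if (x : ℕ) = (l : ℕ) then 1 else 0 := by
      intro l
      simp only [embedLast, Matrix.of_apply]
      rw [dif_neg (by omega)]
    rw [hBP, Matrix.mul_apply]
    rw [Finset.sum_eq_single x
      (fun l _ hl => by rw [hfar l, if_neg (fun hv => hl (Fin.ext hv.symm)), zero_mul])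
      (fun hmem => absurd (Finset.mem_univ _) hmem)]
    rw [hfar x, if_pos rfl, one_mul]
    have hx' : x = ⟨i - 1, by omega⟩ := Fin.ext hx
    rw [hx']
    exact ih1 i hi1 hi2 j _
  · intro t x hx j
    have htN : (t : ℕ) < r := t.isLt
    rw [hBP, Matrix.mul_apply]
    rw [sum_window (N - r) (by omega : (N - r) + r ≤ N)
      (fun l => embedLast N r Llast x l * Bm N r Lk (N - r) l j)
      (by
        intro l hl
        have hl' : (l : ℕ) < N - r := by have := l.isLt; omega
        simp only [embedLast, Matrix.of_apply]
        rw [dif_neg (by omega), if_neg (by omega), zero_mul])]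
    rw [Matrix.mul_apply]
    refine Finset.sum_congr rfl fun u _ => ?_
    congr 1
    · simp only [embedLast, Matrix.of_apply]
      rw [dif_pos ⟨by omega, by omega⟩]
      congr 1
      · exact Fin.ext (show (x : ℕ) - (N - r) = (t : ℕ) by omega)
      · exact Fin.ext (show N - r + (u : ℕ) - (N - r) = (u : ℕ) by omega)
    · exact ih2 u j _

end Aux

/-- If all the factors `L_k` (and `L_{N-r+1}`) are lower triangular, then the product
`G = L̃_{N-r+1}·L̃_{N-r}⋯L̃_1` is a lower triangular, lower Green and upper band matrix of
order `r`, with lower Green generators given by the blocks of the `L_k`. -/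
theorem lowerTriangular_product_is_lowerGreen (N r : ℕ) (hr : 0 < r) (hNr : r < N)
    (Lk : ℕ → Matrix (Fin (r + 1)) (Fin (r + 1)) ℂ) (Llast : Matrix (Fin r) (Fin r) ℂ)
    (hLk : ∀ (k : ℕ), 1 ≤ k → k ≤ N - r →
      ∀ i j : Fin (r + 1), (i : ℕ) < (j : ℕ) → Lk k i j = 0)
    (hLlast : ∀ i j : Fin r, (i : ℕ) < (j : ℕ) → Llast i j = 0)
    (G : Matrix (Fin N) (Fin N) ℂ)
    (hG : G = embedLast N r Llast * prodDesc N r Lk) :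
    (∀ i j : Fin N, (i : ℕ) < (j : ℕ) → G i j = 0) ∧
    IsLowerGreen N r G ∧ IsUpperBand N r G ∧
    IsLowerGreenGenerators N r hNr (fun k => blkP r (Lk k)) (fun k => blkQ r (Lk k))
      (fun k => blkA r (Lk k)) Llast G := by
  subst hG
  obtain ⟨RF1, RF2⟩ := G_rows Lk hr hNr hLk Llast
  have LT : ∀ i j : Fin N, (i : ℕ) < (j : ℕ) →
      (embedLast N r Llast * prodDesc N r Lk) i j = 0 := by
    intro i j hij
    rcases Nat.lt_or_ge (i : ℕ) (N - r) with hc | hc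
    · have h1 := RF1 ((i : ℕ) + 1) (by omega) (by omega) i
        (show (i : ℕ) = (i : ℕ) + 1 - 1 by omega) j
      rw [h1, Nat.add_sub_cancel, Matrix.mul_apply]
      refine Finset.sum_eq_zero fun s _ => ?_
      rcases Nat.eq_zero_or_pos (s : ℕ) with hs | hs
      · rw [Rm_support Lk hLk (i : ℕ) (by omega) s j (by omega), mul_zero]
      · have hz : blkP r (Lk ((i : ℕ) + 1)) 0 s = 0 := by
          simp only [blkP, Matrix.of_apply]
          exact hLk _ (by omega) (by omega) _ _ (by simpa using hs)
        rw [hz, zero_mul]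
    · have htlt : (i : ℕ) - (N - r) < r := by have := i.isLt; omega
      have h1 := RF2 ⟨(i : ℕ) - (N - r), htlt⟩ i
        (show (i : ℕ) = N - r + ((i : ℕ) - (N - r)) by omega) j
      rw [h1, Matrix.mul_apply]
      refine Finset.sum_eq_zero fun s _ => ?_
      rcases Nat.lt_or_ge ((i : ℕ) - (N - r)) (s : ℕ) with hs | hs
      · rw [hLlast ⟨(i : ℕ) - (N - r), htlt⟩ s hs, zero_mul]
      · rw [Rm_support Lk hLk (N - r) le_rfl s j (by omega), mul_zero]
  have hGreen : IsLowerGreen N r (embedLast N r Llast * prodDesc N r Lk) := by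
    intro k hk1 hk2
    set A : ℕ → Matrix (Fin r) (Fin r) ℂ := fun i => blkA r (Lk i) with hA
    set W : Matrix (Fin r) (Fin (k + r - 1)) ℂ :=
      Matrix.of fun u j => Rm N r Lk (k - 1) u ⟨(j : ℕ), by have := j.isLt; omega⟩ with hW
    set V : Matrix (Fin (N - k + 1)) (Fin r) ℂ :=
      Matrix.of fun i0 u =>
        if k + (i0 : ℕ) ≤ N - r then
          (blkP r (Lk (k + (i0 : ℕ))) * aGT r A (k + (i0 : ℕ)) (k - 1)) 0 u
        else
          (Llast * aGT r A (N - r + 1) (k - 1))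
            ⟨k - 1 + (i0 : ℕ) - (N - r), by have := i0.isLt; omega⟩ u with hV
    have hEq : ((embedLast N r Llast * prodDesc N r Lk).submatrix
        (fun i : Fin (N - k + 1) => (⟨k - 1 + (i : ℕ), by have := i.isLt; omega⟩ : Fin N))
        (fun j : Fin (k + r - 1) => (⟨(j : ℕ), by have := j.isLt; omega⟩ : Fin N)))
          = V * W := by
      ext i0 j
      simp only [Matrix.submatrix_apply]
      have hjv : (j : ℕ) < k + r - 1 := j.isLt
      by_cases hc : k + (i0 : ℕ) ≤ N - r
      · have h1 := RF1 (k + (i0 : ℕ)) (by omega) hc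
          ⟨k - 1 + (i0 : ℕ), by have := i0.isLt; omega⟩
          (show k - 1 + (i0 : ℕ) = k + (i0 : ℕ) - 1 by omega)
          ⟨(j : ℕ), by have := j.isLt; omega⟩
        rw [h1]
        rw [mul_Rm_factor Lk hLk (blkP r (Lk (k + (i0 : ℕ)))) (k - 1) (k + (i0 : ℕ) - 1)
          (by omega) (by omega) 0 _ (show (j : ℕ) < k - 1 + r by omega)]
        rw [show k + (i0 : ℕ) - 1 + 1 = k + (i0 : ℕ) from by omega]
        rw [Matrix.mul_apply, Matrix.mul_apply]
        refine Finset.sum_congr rfl fun u _ => ?_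
        congr 1
        simp only [hV, Matrix.of_apply, if_pos hc]
        rfl
      · have htlt : k - 1 + (i0 : ℕ) - (N - r) < r := by have := i0.isLt; omega
        have h1 := RF2 ⟨k - 1 + (i0 : ℕ) - (N - r), htlt⟩
          ⟨k - 1 + (i0 : ℕ), by have := i0.isLt; omega⟩
          (show k - 1 + (i0 : ℕ) = N - r + (k - 1 + (i0 : ℕ) - (N - r)) by omega)
          ⟨(j : ℕ), by have := j.isLt; omega⟩
        rw [h1]
        rw [mul_Rm_factor Lk hLk Llast (k - 1) (N - r) (by omega) le_rfl _ _
          (show (j : ℕ) < k - 1 + r by omega)]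
        rw [Matrix.mul_apply, Matrix.mul_apply]
        refine Finset.sum_congr rfl fun u _ => ?_
        congr 1
        simp only [hV, Matrix.of_apply, if_neg hc]
        rfl
    rw [hEq]
    exact le_trans (Matrix.rank_mul_le_right V W)
      (le_trans (Matrix.rank_le_card_height W) (by simp))
  refine ⟨LT, hGreen, fun i j h => LT i j (by omega), ?_, ?_, ?_, ?_⟩
  · intro i hi1 hi2 j
    have h1 := RF1 i hi1 hi2 ⟨i - 1, by omega⟩ rfl ⟨(j : ℕ), by have := j.isLt; omega⟩
    rw [h1, mul_Rm_factor Lk hLk (blkP r (Lk i)) 0 (i - 1) (Nat.zero_le _) (by omega) 0 _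
      (show (j : ℕ) < 0 + r by omega)]
    rw [show i - 1 + 1 = i from by omega]
    exact mul_Rm0 Lk _ 0 _ j rfl
  · intro i hi1 hi2 s hs1 hs2
    have h1 := RF1 i hi1 hi2 ⟨i - 1, by omega⟩ rfl ⟨r + s - 2, by omega⟩
    rw [h1, mul_Rm_factor Lk hLk (blkP r (Lk i)) (s - 1) (i - 1) (by omega) (by omega) 0 _
      (show r + s - 2 < s - 1 + r by omega)]
    rw [show i - 1 + 1 = i from by omega]
    rw [Matrix.mul_apply, Matrix.mul_apply]
    refine Finset.sum_congr rfl fun u _ => ?_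
    congr 1
    exact Rm_lastcol Lk hLk (s - 1) (by omega) (by omega) u _
      (show r + s - 2 = s - 1 + r - 1 by omega)
  · intro t j
    have h1 := RF2 t ⟨N - r + (t : ℕ), by have := t.isLt; omega⟩ rfl
      ⟨(j : ℕ), by have := j.isLt; omega⟩
    rw [h1, mul_Rm_factor Lk hLk Llast 0 (N - r) (Nat.zero_le _) le_rfl t _
      (show (j : ℕ) < 0 + r by omega)]
    exact mul_Rm0 Lk _ t _ j rfl
  · intro t s hs1 hs2
    have h1 := RF2 t ⟨N - r + (t : ℕ), by have := t.isLt; omega⟩ rfl ⟨r + s - 2, by omega⟩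
    rw [h1, mul_Rm_factor Lk hLk Llast (s - 1) (N - r) (by omega) le_rfl t _
      (show r + s - 2 < s - 1 + r by omega)]
    rw [Matrix.mul_apply, Matrix.mul_apply]
    refine Finset.sum_congr rfl fun u _ => ?_
    congr 1
    exact Rm_lastcol Lk hLk (s - 1) (by omega) (by omega) u _
      (show r + s - 2 = s - 1 + r - 1 by omega)
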